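/- First-derivative comparison between the continuous interpolant and the discrete forward difference: let m = 2R+1 be odd, h = L/m, and let φ be the complex grid function determined by coefficients c : {−R,…,R}³ → ℂ via φ_{i,j,k} = Σ_{r,s,t=−R}^{R} c_{r,s,t} e^{2πi(r x_i + s y_j + t z_k)/L}. Then L³ Σ_{r,s,t=−R}^{R} (2π r / L)² |c_{r,s,t}|² ≤ (π/2)² · h³ Σ_{i,j,k=1}^{m} |φ_{i+1,j,k} − φ_{i,j,k}|²/h², where the index i+1 is taken modulo m. -/

import Mathlib

open Finset Real

/-- The grid point `x_i = (i - 1/2) h`. -/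
noncomputable def xg (h : ℝ) (i : ℤ) : ℝ := ((i : ℝ) - 1 / 2) * h

/-- The complex grid function determined by Fourier coefficients `c` on `{-R,…,R}³`:
`φ_{i,j,k} = Σ_{r,s,t=-R}^{R} c_{r,s,t} e^{2πi(r x_i + s y_j + t z_k)/L}`
(as a function of the integer indices, it is automatically `m`-periodic, `m = 2R+1`). -/
noncomputable def fgrid (L h : ℝ) (R : ℕ) (c : ℤ × ℤ × ℤ → ℂ) (i j k : ℤ) : ℂ :=
  ∑ r ∈ Finset.Icc (-(R : ℤ)) (R : ℤ), ∑ s ∈ Finset.Icc (-(R : ℤ)) (R : ℤ),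
    ∑ t ∈ Finset.Icc (-(R : ℤ)) (R : ℤ),
      c (r, s, t) *
        Complex.exp (2 * (Real.pi : ℂ) * Complex.I *
          ((r * xg h i + s * xg h j + t * xg h k : ℝ) : ℂ) / (L : ℂ))

lemma sum_Icc_int_eq_range (m : ℕ) (f : ℤ → ℂ) :
    ∑ i ∈ Finset.Icc (1:ℤ) (m:ℤ), f i = ∑ i ∈ Finset.range m, f ((i:ℤ)+1) := by
  apply Finset.sum_nbij' (fun i : ℤ => (i-1).toNat) (fun i : ℕ => (i:ℤ)+1)
  · intro a ha; simp only [Finset.mem_Icc] at ha; simp; omega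
  · intro a ha; simp only [Finset.mem_range] at ha; simp only [Finset.mem_Icc]; omega
  · intro a ha; simp only [Finset.mem_Icc] at ha; omega
  · intro a ha; simp
  · intro a ha; simp only [Finset.mem_Icc] at ha; congr 1; omega

lemma ortho0 (m : ℕ) (hm : 0 < m) (n : ℤ) (hn : n ≠ 0) (hn2 : n.natAbs < m) :
    ∑ i ∈ Finset.Icc (1:ℤ) (m:ℤ),
      Complex.exp (2 * (Real.pi:ℂ) * Complex.I * n * (((i:ℂ)) - 1/2) / m) = 0 := by
  have hmc : (m:ℂ) ≠ 0 := by exact_mod_cast hm.ne'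
  set z : ℂ := Complex.exp (2 * (Real.pi:ℂ) * Complex.I * n / m) with hz
  rw [sum_Icc_int_eq_range]
  have hzpow : ∀ i : ℕ, Complex.exp (2 * (Real.pi:ℂ) * Complex.I * n * ((((i:ℕ):ℂ)+1) - 1/2) / m)
      = Complex.exp (2 * (Real.pi:ℂ) * Complex.I * n * (1/2) / m) * z ^ i := by
    intro i
    rw [hz, ← Complex.exp_nat_mul, ← Complex.exp_add]
    congr 1
    field_simp
    ring
  have hstep : ∀ i ∈ Finset.range m, Complex.exp (2 * (Real.pi:ℂ) * Complex.I * n * ((((i:ℤ):ℂ))+1 - 1/2) / m)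
      = Complex.exp (2 * (Real.pi:ℂ) * Complex.I * n * (1/2) / m) * z ^ i := by
    intro i _
    have := hzpow i
    push_cast at this ⊢
    exact this
  rw [Finset.sum_congr rfl (fun i hi => by push_cast; exact hstep i hi)]
  rw [← Finset.mul_sum]
  have hz1 : z ≠ 1 := by
    rw [Ne, Complex.exp_eq_one_iff]
    rintro ⟨k, hk⟩
    rw [div_eq_iff hmc] at hk
    have hI : (2 * (Real.pi:ℂ) * Complex.I) ≠ 0 := by simp [Complex.I_ne_zero, Real.pi_ne_zero]
    have hnc : (n:ℂ) = ((k * m : ℤ):ℂ) := by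
      apply mul_left_cancel₀ hI
      push_cast
      linear_combination hk
    have hnk : n = k * m := by exact_mod_cast hnc
    have hk0 : k ≠ 0 := by rintro rfl; simp at hnk; exact hn hnk
    have : m ≤ n.natAbs := by
      rw [hnk, Int.natAbs_mul, Int.natAbs_natCast]
      calc m = 1 * m := (one_mul m).symm
      _ ≤ k.natAbs * m := Nat.mul_le_mul_right m (by omega)
    omega
  have hzm : z ^ m = 1 := by
    rw [hz, ← Complex.exp_nat_mul]
    have : (m:ℂ) * (2 * (Real.pi:ℂ) * Complex.I * n / m) = n * (2 * Real.pi * Complex.I) := by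
      field_simp
    rw [this]
    exact Complex.exp_int_mul_two_pi_mul_I n
  rw [geom_sum_eq hz1, hzm]
  simp

noncomputable def Eg (m : ℕ) (n i : ℤ) : ℂ :=
  Complex.exp (2 * (Real.pi:ℂ) * Complex.I * n * ((i:ℂ) - 1/2) / m)

lemma Eg_conj (m : ℕ) (n i : ℤ) :
    (starRingEnd ℂ) (Eg m n i) = Complex.exp (-(2 * (Real.pi:ℂ) * Complex.I * n * ((i:ℂ) - 1/2) / m)) := by
  rw [Eg, ← Complex.exp_conj]
  congr 1
  simp [map_div₀, map_ofNat]
  ring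

lemma Eg_mul_conj (m : ℕ) (r r' i : ℤ) :
    Eg m r i * (starRingEnd ℂ) (Eg m r' i) = Eg m (r - r') i := by
  rw [Eg_conj, Eg, Eg, ← Complex.exp_add]
  congr 1
  push_cast
  ring

lemma Eg_ortho (R : ℕ) (m : ℕ) (hm : m = 2*R+1) (r r' : ℤ)
    (hr : r ∈ Finset.Icc (-(R:ℤ)) (R:ℤ)) (hr' : r' ∈ Finset.Icc (-(R:ℤ)) (R:ℤ)) :
    ∑ i ∈ Finset.Icc (1:ℤ) (m:ℤ), Eg m r i * (starRingEnd ℂ) (Eg m r' i)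
      = if r = r' then (m:ℂ) else 0 := by
  simp only [Eg_mul_conj]
  simp only [Finset.mem_Icc] at hr hr'
  by_cases hrr : r = r'
  · subst hrr
    simp only [if_pos rfl, sub_self, Eg]
    rw [Finset.sum_congr rfl (fun i _ => by norm_num : ∀ i ∈ Finset.Icc (1:ℤ) (m:ℤ),
      Complex.exp (2 * (Real.pi:ℂ) * Complex.I * (0:ℤ) * ((i:ℂ) - 1/2) / m) = 1)]
    rw [Finset.sum_const, Int.card_Icc]
    simp
  · rw [if_neg hrr]
    have := ortho0 m (by omega) (r - r') (by omega) (by omega)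
    rw [← this]
    apply Finset.sum_congr rfl
    intro i _
    rw [Eg]

lemma Eg_succ (m : ℕ) (n i : ℤ) :
    Eg m n (i+1) = Eg m n i * Complex.exp (2 * (Real.pi:ℂ) * Complex.I * n / m) := by
  rw [Eg, Eg, ← Complex.exp_add]
  congr 1
  push_cast
  ring

lemma parseval {ι κ : Type*} [DecidableEq ι] (B : Finset ι) (G : Finset κ) (F : ι → κ → ℂ) (K : ℂ)
    (hF : ∀ p ∈ B, ∀ p' ∈ B, ∑ q ∈ G, F p q * (starRingEnd ℂ) (F p' q) = if p = p' then K else 0)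
    (a : ι → ℂ) :
    ∑ q ∈ G, (∑ p ∈ B, a p * F p q) * (starRingEnd ℂ) (∑ p ∈ B, a p * F p q)
      = K * ∑ p ∈ B, a p * (starRingEnd ℂ) (a p) := by
  calc ∑ q ∈ G, (∑ p ∈ B, a p * F p q) * (starRingEnd ℂ) (∑ p ∈ B, a p * F p q)
      = ∑ q ∈ G, ∑ p ∈ B, ∑ p' ∈ B,
          (a p * (starRingEnd ℂ) (a p')) * (F p q * (starRingEnd ℂ) (F p' q)) := by
        refine Finset.sum_congr rfl fun q _ => ?_
        rw [map_sum, Finset.sum_mul_sum]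
        refine Finset.sum_congr rfl fun p _ => Finset.sum_congr rfl fun p' _ => ?_
        rw [map_mul]; ring
    _ = ∑ p ∈ B, ∑ p' ∈ B,
          (a p * (starRingEnd ℂ) (a p')) * ∑ q ∈ G, F p q * (starRingEnd ℂ) (F p' q) := by
        rw [Finset.sum_comm]
        refine Finset.sum_congr rfl fun p _ => ?_
        rw [Finset.sum_comm]
        refine Finset.sum_congr rfl fun p' _ => ?_
        rw [Finset.mul_sum]
    _ = ∑ p ∈ B, (a p * (starRingEnd ℂ) (a p)) * K := by
        refine Finset.sum_congr rfl fun p hp => ?_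
        rw [Finset.sum_eq_single p]
        · rw [hF p hp p hp, if_pos rfl]
        · intro p' hp' hne
          rw [hF p hp p' hp', if_neg (fun hx => hne hx.symm), mul_zero]
        · intro hp'; exact absurd hp hp'
    _ = K * ∑ p ∈ B, a p * (starRingEnd ℂ) (a p) := by
        rw [← Finset.sum_mul]; ring

lemma absexp (θ : ℝ) : ‖Complex.exp ((θ:ℂ) * Complex.I) - 1‖^2 = 2 - 2 * Real.cos θ := by
  have he : Complex.exp ((θ:ℂ) * Complex.I) - 1
      = Complex.ofReal (Real.cos θ - 1) + Complex.ofReal (Real.sin θ) * Complex.I := by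
    rw [Complex.exp_mul_I, ← Complex.ofReal_cos, ← Complex.ofReal_sin]; push_cast; ring
  rw [he, Complex.sq_norm, Complex.normSq_add_mul_I]
  nlinarith [Real.sin_sq_add_cos_sq θ]

lemma jord {t : ℝ} (h0 : 0 ≤ t) (h1 : t ≤ 1/2) : 16 * t^2 ≤ 2 - 2 * Real.cos (2*π*t) := by
  have hpi := Real.pi_pos
  have hs : 2/π * (π*t) ≤ Real.sin (π*t) :=
    Real.mul_le_sin (by positivity) (by nlinarith)
  have hs' : 2*t ≤ Real.sin (π*t) := by
    rw [show 2/π * (π*t) = 2*t by field_simp] at hs; exact hs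
  have hc : Real.cos (2*π*t) = 2 * Real.cos (π*t)^2 - 1 := by
    rw [show 2*π*t = 2*(π*t) by ring, Real.cos_two_mul]
  nlinarith [Real.sin_sq_add_cos_sq (π*t), hs']

lemma wbound (R m : ℕ) (hm : m = 2*R+1) (r : ℤ) (hr : r.natAbs ≤ R) :
    16 * (r:ℝ)^2 / (m:ℝ)^2 ≤ ‖Complex.exp (2*(π:ℂ)*Complex.I*(r:ℂ)/(m:ℂ)) - 1‖^2 := by
  have hm0 : (0:ℝ) < (m:ℝ) := by exact_mod_cast (by omega : 0 < m)
  have hexp : (2*(π:ℂ)*Complex.I*(r:ℂ)/(m:ℂ)) = ((2*π*((r:ℝ)/m) : ℝ):ℂ) * Complex.I := by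
    push_cast; ring
  rw [hexp, absexp]
  have hcos : Real.cos (2*π*((r:ℝ)/m)) = Real.cos (2*π*(|(r:ℝ)|/m)) := by
    rcases abs_choice (r:ℝ) with hab | hab
    · rw [hab]
    · rw [hab, show 2*π*(-(r:ℝ)/m) = -(2*π*((r:ℝ)/m)) by ring, Real.cos_neg]
  rw [hcos]
  have h0 : 0 ≤ |(r:ℝ)|/m := by positivity
  have h1 : |(r:ℝ)|/m ≤ 1/2 := by
    rw [div_le_iff₀ hm0]
    have hra : |(r:ℝ)| ≤ (R:ℝ) := by
      rw [← Int.cast_abs]; exact_mod_cast (by rw [Int.abs_eq_natAbs]; exact_mod_cast hr : |r| ≤ (R:ℤ))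
    have : ((m:ℝ)) = 2*(R:ℝ)+1 := by exact_mod_cast congrArg (Nat.cast : ℕ → ℝ) hm
    rw [this]; linarith
  have := jord h0 h1
  calc 16*(r:ℝ)^2/(m:ℝ)^2 = 16*(|(r:ℝ)|/m)^2 := by rw [div_pow, _root_.sq_abs]; ring
  _ ≤ _ := this


/-- First-derivative comparison between the continuous interpolant and the discrete
forward difference. -/
theorem stmt13 (L : ℝ) (hL : 0 < L) (R : ℕ) (m : ℕ) (hm : m = 2 * R + 1)
    (h : ℝ) (hh : h = L / m) (c : ℤ × ℤ × ℤ → ℂ)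
    (Φ : ℤ → ℤ → ℤ → ℂ) (hΦ : Φ = fgrid L h R c) :
    L ^ 3 * ∑ r ∈ Finset.Icc (-(R : ℤ)) (R : ℤ), ∑ s ∈ Finset.Icc (-(R : ℤ)) (R : ℤ),
        ∑ t ∈ Finset.Icc (-(R : ℤ)) (R : ℤ),
          (2 * Real.pi * r / L) ^ 2 * ‖c (r, s, t)‖ ^ 2 ≤
      (Real.pi / 2) ^ 2 *
        (h ^ 3 * ∑ i ∈ Finset.Icc (1 : ℤ) (m : ℤ), ∑ j ∈ Finset.Icc (1 : ℤ) (m : ℤ),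
          ∑ k ∈ Finset.Icc (1 : ℤ) (m : ℤ),
            ‖Φ (i + 1) j k - Φ i j k‖ ^ 2 / h ^ 2) := by
  subst hΦ
  have hm0 : 0 < m := by omega
  have hmR : (0:ℝ) < (m:ℝ) := by exact_mod_cast hm0
  have hL0 : L ≠ 0 := hL.ne'
  have hh0 : 0 < h := by rw [hh]; positivity
  have hLc : (L:ℂ) ≠ 0 := by exact_mod_cast hL0
  have hmc : (m:ℂ) ≠ 0 := by exact_mod_cast hmR.ne'
  -- step A : exponential splitting
  have hsplit : ∀ (r s t i j k : ℤ),
      Complex.exp (2 * (Real.pi:ℂ) * Complex.I *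
          ((r * xg h i + s * xg h j + t * xg h k : ℝ):ℂ) / (L:ℂ))
        = Eg m r i * Eg m s j * Eg m t k := by
    intro r s t i j k
    rw [Eg, Eg, Eg, ← Complex.exp_add, ← Complex.exp_add]
    congr 1
    rw [xg, xg, xg, hh]
    push_cast
    field_simp
  -- step A': difference formula
  have hdiff : ∀ i j k : ℤ, fgrid L h R c (i+1) j k - fgrid L h R c i j k
      = ∑ p ∈ (Finset.Icc (-(R:ℤ)) (R:ℤ)) ×ˢ
          ((Finset.Icc (-(R:ℤ)) (R:ℤ)) ×ˢ (Finset.Icc (-(R:ℤ)) (R:ℤ))),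
          (c p * (Complex.exp (2*(Real.pi:ℂ)*Complex.I*(p.1:ℂ)/(m:ℂ)) - 1)) *
            (Eg m p.1 i * Eg m p.2.1 j * Eg m p.2.2 k) := by
    intro i j k
    rw [Finset.sum_product]
    simp_rw [Finset.sum_product]
    rw [fgrid, fgrid, ← Finset.sum_sub_distrib]
    refine Finset.sum_congr rfl fun r _ => ?_
    rw [← Finset.sum_sub_distrib]
    refine Finset.sum_congr rfl fun s _ => ?_
    rw [← Finset.sum_sub_distrib]
    refine Finset.sum_congr rfl fun t _ => ?_
    rw [hsplit r s t (i+1) j k, hsplit r s t i j k, Eg_succ]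
    ring
  -- orthogonality of the 3d system
  have hFo : ∀ p ∈ (Finset.Icc (-(R:ℤ)) (R:ℤ)) ×ˢ
          ((Finset.Icc (-(R:ℤ)) (R:ℤ)) ×ˢ (Finset.Icc (-(R:ℤ)) (R:ℤ))),
      ∀ p' ∈ (Finset.Icc (-(R:ℤ)) (R:ℤ)) ×ˢ
          ((Finset.Icc (-(R:ℤ)) (R:ℤ)) ×ˢ (Finset.Icc (-(R:ℤ)) (R:ℤ))),
      ∑ q ∈ (Finset.Icc (1:ℤ) (m:ℤ)) ×ˢ ((Finset.Icc (1:ℤ) (m:ℤ)) ×ˢ (Finset.Icc (1:ℤ) (m:ℤ))),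
        (fun (p : ℤ×ℤ×ℤ) (q : ℤ×ℤ×ℤ) => Eg m p.1 q.1 * Eg m p.2.1 q.2.1 * Eg m p.2.2 q.2.2) p q *
          (starRingEnd ℂ) ((fun (p : ℤ×ℤ×ℤ) (q : ℤ×ℤ×ℤ) =>
            Eg m p.1 q.1 * Eg m p.2.1 q.2.1 * Eg m p.2.2 q.2.2) p' q)
        = if p = p' then ((m:ℂ))^3 else 0 := by
    rintro ⟨r, s, t⟩ hp ⟨r', s', t'⟩ hp'
    simp only [Finset.mem_product] at hp hp'
    obtain ⟨h1, h2, h3⟩ := hp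
    obtain ⟨h1', h2', h3'⟩ := hp'
    rw [Finset.sum_product]
    simp_rw [Finset.sum_product]
    have hterm : ∀ i j k : ℤ,
        (Eg m r i * Eg m s j * Eg m t k) * (starRingEnd ℂ) (Eg m r' i * Eg m s' j * Eg m t' k)
          = (Eg m r i * (starRingEnd ℂ) (Eg m r' i)) *
            ((Eg m s j * (starRingEnd ℂ) (Eg m s' j)) * (Eg m t k * (starRingEnd ℂ) (Eg m t' k))) := by
      intro i j k; rw [map_mul, map_mul]; ring
    simp_rw [hterm, ← Finset.mul_sum, ← Finset.sum_mul]
    rw [Eg_ortho R m hm r r' h1 h1', Eg_ortho R m hm s s' h2 h2', Eg_ortho R m hm t t' h3 h3']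
    by_cases h12 : ((r,s,t) : ℤ×ℤ×ℤ) = (r',s',t')
    · obtain ⟨hA, hB', hC'⟩ : r = r' ∧ s = s' ∧ t = t' := by
        simpa [Prod.ext_iff] using h12
      rw [if_pos hA, if_pos hB', if_pos hC', if_pos h12]; ring
    · rw [if_neg h12]
      have hsplit3 : ¬(r=r') ∨ ¬(s=s') ∨ ¬(t=t') := by
        by_contra hx
        push_neg at hx
        exact h12 (by simp [Prod.ext_iff, hx.1, hx.2.1, hx.2.2])
      rcases hsplit3 with hx|hx|hx <;> simp [if_neg hx]
  -- Parseval (complex form)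
  have hC := parseval
    ((Finset.Icc (-(R:ℤ)) (R:ℤ)) ×ˢ ((Finset.Icc (-(R:ℤ)) (R:ℤ)) ×ˢ (Finset.Icc (-(R:ℤ)) (R:ℤ))))
    ((Finset.Icc (1:ℤ) (m:ℤ)) ×ˢ ((Finset.Icc (1:ℤ) (m:ℤ)) ×ˢ (Finset.Icc (1:ℤ) (m:ℤ))))
    (fun (p : ℤ×ℤ×ℤ) (q : ℤ×ℤ×ℤ) => Eg m p.1 q.1 * Eg m p.2.1 q.2.1 * Eg m p.2.2 q.2.2)
    ((m:ℂ)^3) hFo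
    (fun p => c p * (Complex.exp (2*(Real.pi:ℂ)*Complex.I*(p.1:ℂ)/(m:ℂ)) - 1))
  have habs2 : ∀ z : ℂ, ((‖z‖ : ℝ):ℂ)^2 = z * (starRingEnd ℂ) z := fun z => by
    rw [← Complex.ofReal_pow, Complex.sq_norm, Complex.mul_conj]
  -- real Parseval
  have hpars : ∑ i ∈ Finset.Icc (1:ℤ) (m:ℤ), ∑ j ∈ Finset.Icc (1:ℤ) (m:ℤ),
        ∑ k ∈ Finset.Icc (1:ℤ) (m:ℤ),
          ‖fgrid L h R c (i+1) j k - fgrid L h R c i j k‖^2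
      = (m:ℝ)^3 * ∑ r ∈ Finset.Icc (-(R:ℤ)) (R:ℤ), ∑ s ∈ Finset.Icc (-(R:ℤ)) (R:ℤ),
          ∑ t ∈ Finset.Icc (-(R:ℤ)) (R:ℤ),
            ‖c (r,s,t) * (Complex.exp (2*(Real.pi:ℂ)*Complex.I*((r:ℤ):ℂ)/(m:ℂ)) - 1)‖^2 := by
    apply Complex.ofReal_injective
    push_cast
    calc (∑ i ∈ Finset.Icc (1:ℤ) (m:ℤ), ∑ j ∈ Finset.Icc (1:ℤ) (m:ℤ),
        ∑ k ∈ Finset.Icc (1:ℤ) (m:ℤ),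
          ((‖fgrid L h R c (i+1) j k - fgrid L h R c i j k‖ :ℂ))^2)
        = ∑ q ∈ (Finset.Icc (1:ℤ) (m:ℤ)) ×ˢ ((Finset.Icc (1:ℤ) (m:ℤ)) ×ˢ (Finset.Icc (1:ℤ) (m:ℤ))),
            (∑ p ∈ (Finset.Icc (-(R:ℤ)) (R:ℤ)) ×ˢ
              ((Finset.Icc (-(R:ℤ)) (R:ℤ)) ×ˢ (Finset.Icc (-(R:ℤ)) (R:ℤ))),
              (c p * (Complex.exp (2*(Real.pi:ℂ)*Complex.I*(p.1:ℂ)/(m:ℂ)) - 1)) *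
                (Eg m p.1 q.1 * Eg m p.2.1 q.2.1 * Eg m p.2.2 q.2.2)) *
            (starRingEnd ℂ) (∑ p ∈ (Finset.Icc (-(R:ℤ)) (R:ℤ)) ×ˢ
              ((Finset.Icc (-(R:ℤ)) (R:ℤ)) ×ˢ (Finset.Icc (-(R:ℤ)) (R:ℤ))),
              (c p * (Complex.exp (2*(Real.pi:ℂ)*Complex.I*(p.1:ℂ)/(m:ℂ)) - 1)) *
                (Eg m p.1 q.1 * Eg m p.2.1 q.2.1 * Eg m p.2.2 q.2.2)) := by
          rw [Finset.sum_product]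
          simp_rw [Finset.sum_product]
          refine Finset.sum_congr rfl fun i _ => Finset.sum_congr rfl fun j _ =>
            Finset.sum_congr rfl fun k _ => ?_
          rw [hdiff i j k, habs2]
          simp_rw [Finset.sum_product]
      _ = ((m:ℂ)^3) * ∑ p ∈ (Finset.Icc (-(R:ℤ)) (R:ℤ)) ×ˢ
              ((Finset.Icc (-(R:ℤ)) (R:ℤ)) ×ˢ (Finset.Icc (-(R:ℤ)) (R:ℤ))),
            (c p * (Complex.exp (2*(Real.pi:ℂ)*Complex.I*(p.1:ℂ)/(m:ℂ)) - 1)) *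
            (starRingEnd ℂ) (c p * (Complex.exp (2*(Real.pi:ℂ)*Complex.I*(p.1:ℂ)/(m:ℂ)) - 1)) := hC
      _ = ((m:ℂ))^3 * ∑ r ∈ Finset.Icc (-(R:ℤ)) (R:ℤ), ∑ s ∈ Finset.Icc (-(R:ℤ)) (R:ℤ),
          ∑ t ∈ Finset.Icc (-(R:ℤ)) (R:ℤ),
            ((‖c (r,s,t) *
              (Complex.exp (2*(Real.pi:ℂ)*Complex.I*((r:ℤ):ℂ)/(m:ℂ)) - 1)‖:ℂ))^2 := by
          rw [Finset.sum_product]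
          simp_rw [Finset.sum_product]
          congr 1
          refine Finset.sum_congr rfl fun r _ => Finset.sum_congr rfl fun s _ =>
            Finset.sum_congr rfl fun t _ => ?_
          exact (habs2 _).symm
  -- final computation
  have hgoalR : ∑ i ∈ Finset.Icc (1:ℤ) (m:ℤ), ∑ j ∈ Finset.Icc (1:ℤ) (m:ℤ),
        ∑ k ∈ Finset.Icc (1:ℤ) (m:ℤ),
          ‖fgrid L h R c (i+1) j k - fgrid L h R c i j k‖^2 / h^2
      = ((m:ℝ)^3 * ∑ r ∈ Finset.Icc (-(R:ℤ)) (R:ℤ), ∑ s ∈ Finset.Icc (-(R:ℤ)) (R:ℤ),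
          ∑ t ∈ Finset.Icc (-(R:ℤ)) (R:ℤ),
            ‖c (r,s,t) *
              (Complex.exp (2*(Real.pi:ℂ)*Complex.I*((r:ℤ):ℂ)/(m:ℂ)) - 1)‖^2) / h^2 := by
    simp_rw [← Finset.sum_div]
    rw [hpars]
  rw [hgoalR]
  have hrw : ∀ X : ℝ, (Real.pi/2)^2 * (h^3 * (((m:ℝ)^3*X)/h^2))
      = ((Real.pi/2)^2*h*(m:ℝ)^3)*X := by
    intro X
    field_simp
  rw [hrw]
  simp_rw [Finset.mul_sum]
  refine Finset.sum_le_sum fun r hr => ?_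
  refine Finset.sum_le_sum fun s _ => ?_
  refine Finset.sum_le_sum fun t _ => ?_
  have hrR : r.natAbs ≤ R := by
    simp only [Finset.mem_Icc] at hr
    omega
  have hw := wbound R m hm r hrR
  rw [norm_mul, mul_pow]
  have hA : (0:ℝ) ≤ ‖c (r,s,t)‖^2 := by positivity
  calc L^3 * ((2*Real.pi*(r:ℝ)/L)^2 * ‖c (r,s,t)‖^2)
      = ((Real.pi/2)^2*h*(m:ℝ)^3) *
          (‖c (r,s,t)‖^2 * (16*(r:ℝ)^2/(m:ℝ)^2)) := by
        rw [hh]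
        field_simp
        ring
    _ ≤ ((Real.pi/2)^2*h*(m:ℝ)^3) * (‖c (r,s,t)‖^2 *
          ‖Complex.exp (2*(Real.pi:ℂ)*Complex.I*((r:ℤ):ℂ)/(m:ℂ)) - 1‖^2) := by
        apply mul_le_mul_of_nonneg_left _ (by positivity)
        exact mul_le_mul_of_nonneg_left hw hA
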